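/- For 0 < s < 1 the function g(s) = (1-s)(K(s)/E(s))² - 2(K(s)/E(s)) + (4+s)/(4-3s) is negative, where K and E are the complete elliptic integrals of the first and second kind. -/

import Mathlib

open Real Filter Topology Set
open MeasureTheory intervalIntegral

/-- Complete elliptic integral of the first kind (parameter = modulus squared). -/
noncomputable def Kel (s : ℝ) : ℝ :=
  ∫ θ in (0:ℝ)..(π / 2), 1 / Real.sqrt (1 - s * Real.sin θ ^ 2)

/-- Complete elliptic integral of the second kind (parameter = modulus squared). -/
noncomputable def Eel (s : ℝ) : ℝ :=
  ∫ θ in (0:ℝ)..(π / 2), Real.sqrt (1 - s * Real.sin θ ^ 2)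

lemma A_pos {s : ℝ} (hs1 : s < 1) (θ : ℝ) : 0 < 1 - s * Real.sin θ ^ 2 := by
  rcases le_or_gt s 0 with h | h
  · nlinarith [sq_nonneg (Real.sin θ)]
  · nlinarith [Real.sin_sq_le_one θ, sq_nonneg (Real.sin θ)]

lemma sqrtA_pos {s : ℝ} (hs1 : s < 1) (θ : ℝ) : 0 < Real.sqrt (1 - s * Real.sin θ ^ 2) :=
  Real.sqrt_pos.mpr (A_pos hs1 θ)

lemma contE {s : ℝ} : Continuous fun θ : ℝ => Real.sqrt (1 - s * Real.sin θ ^ 2) := by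
  fun_prop

lemma contK {s : ℝ} (hs1 : s < 1) :
    Continuous fun θ : ℝ => 1 / Real.sqrt (1 - s * Real.sin θ ^ 2) := by
  apply Continuous.div continuous_const contE
  exact fun θ => (sqrtA_pos hs1 θ).ne'

lemma Kel_zero : Kel 0 = π / 2 := by
  simp [Kel]

lemma Eel_zero : Eel 0 = π / 2 := by
  simp [Eel]

lemma Eel_pos {s : ℝ} (hs1 : s < 1) : 0 < Eel s := by
  apply intervalIntegral.intervalIntegral_pos_of_pos_on
  · exact contE.intervalIntegrable _ _
  · exact fun x _ => sqrtA_pos hs1 x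
  · positivity

lemma Eel_le_Kel {s : ℝ} (hs0 : 0 ≤ s) (hs1 : s < 1) : Eel s ≤ Kel s := by
  apply intervalIntegral.integral_mono_on (by positivity)
    (contE.intervalIntegrable _ _) ((contK hs1).intervalIntegrable _ _)
  intro θ _
  rw [le_div_iff₀ (sqrtA_pos hs1 θ), Real.mul_self_sqrt (A_pos hs1 θ).le]
  nlinarith [sq_nonneg (Real.sin θ)]

lemma Kel_pos {s : ℝ} (hs0 : 0 ≤ s) (hs1 : s < 1) : 0 < Kel s :=
  lt_of_lt_of_le (Eel_pos hs1) (Eel_le_Kel hs0 hs1)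

lemma contEel : Continuous Eel := by
  apply intervalIntegral.continuous_parametric_intervalIntegral_of_continuous'
  fun_prop

lemma contKel : ContinuousOn Kel (Iio 1) := by
  intro s₀ hs₀
  apply ContinuousAt.continuousWithinAt
  have hs₀1 : s₀ < 1 := hs₀
  set c : ℝ := (1 + max s₀ 0) / 2 with hc
  have hm1 : max s₀ 0 < 1 := by simp [hs₀1]
  have hm0 : 0 ≤ max s₀ 0 := le_max_right _ _
  have hc1 : c < 1 := by simp only [hc]; linarith
  have hc0 : 0 < c := by simp only [hc]; linarith
  have hcpos : 0 < 1 - c := by linarith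
  have key : ∀ x < c, ∀ θ : ℝ, 1 - c < 1 - x * Real.sin θ ^ 2 := by
    intro x hx θ
    rcases le_or_gt x 0 with h | h
    · nlinarith [sq_nonneg (Real.sin θ)]
    · nlinarith [Real.sin_sq_le_one θ, sq_nonneg (Real.sin θ)]
  have hcont : Continuous fun x : ℝ =>
      ∫ θ in (0:ℝ)..(π/2), 1 / Real.sqrt (max (1 - x * Real.sin θ ^ 2) (1 - c)) := by
    apply intervalIntegral.continuous_parametric_intervalIntegral_of_continuous'
    apply Continuous.div continuous_const
    · apply Real.continuous_sqrt.comp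
      apply Continuous.max
      · fun_prop
      · exact continuous_const
    · intro p
      have : 0 < max (1 - p.1 * Real.sin p.2 ^ 2) (1 - c) :=
        lt_of_lt_of_le hcpos (le_max_right _ _)
      positivity
  apply hcont.continuousAt.congr
  have hmem : Iio c ∈ 𝓝 s₀ := Iio_mem_nhds (by simp only [hc]; have := le_max_left s₀ 0; linarith)
  filter_upwards [hmem] with x hx
  unfold Kel
  apply intervalIntegral.integral_congr
  intro θ _
  dsimp only
  rw [max_eq_left (key x hx θ).le]



lemma hasDerivAt_Eint {x θ : ℝ} (hx : x < 1) :
    HasDerivAt (fun y => Real.sqrt (1 - y * Real.sin θ ^ 2))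
      (-(Real.sin θ ^ 2) / (2 * Real.sqrt (1 - x * Real.sin θ ^ 2))) x := by
  have h1 : HasDerivAt (fun y : ℝ => 1 - y * Real.sin θ ^ 2) (-(Real.sin θ ^ 2)) x := by
    simpa using ((hasDerivAt_id x).mul_const (Real.sin θ ^ 2)).const_sub 1
  have h2 := (Real.hasDerivAt_sqrt (A_pos hx θ).ne').comp x h1
  simpa [Function.comp_def, div_eq_mul_inv, mul_comm, mul_assoc, mul_left_comm] using h2

lemma hasDerivAt_Kint {x θ : ℝ} (hx : x < 1) :
    HasDerivAt (fun y => 1 / Real.sqrt (1 - y * Real.sin θ ^ 2))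
      (Real.sin θ ^ 2 / (2 * Real.sqrt (1 - x * Real.sin θ ^ 2) ^ 3)) x := by
  have h2 := (hasDerivAt_Eint (θ := θ) hx).inv (sqrtA_pos hx θ).ne'
  have h3 : ∀ y, (Real.sqrt (1 - y * Real.sin θ ^ 2))⁻¹
      = 1 / Real.sqrt (1 - y * Real.sin θ ^ 2) := by intro y; rw [one_div]
  simp only [Pi.inv_def, h3] at h2
  convert h2 using 1 <;> try rfl
  have h4 := (sqrtA_pos hx θ).ne'
  field_simp

lemma contK' {s : ℝ} (hs1 : s < 1) :
    Continuous fun θ : ℝ => 1 / Real.sqrt (1 - s * Real.sin θ ^ 2) :=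
  continuous_const.div (Real.continuous_sqrt.comp (by fun_prop))
    (fun θ => (sqrtA_pos hs1 θ).ne')

lemma contE' {s : ℝ} : Continuous fun θ : ℝ => Real.sqrt (1 - s * Real.sin θ ^ 2) := by
  fun_prop

lemma hasDerivAt_Eel_int {s : ℝ} (hs0 : 0 < s) (hs1 : s < 1) :
    HasDerivAt Eel
      (∫ t in (0:ℝ)..(π/2), -(Real.sin t ^ 2) / (2 * Real.sqrt (1 - s * Real.sin t ^ 2))) s := by
  set c : ℝ := (1 + s) / 2 with hc
  have hc1 : c < 1 := by simp only [hc]; linarith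
  have hcpos : 0 < 1 - c := by linarith
  have hball : ∀ x ∈ Metric.ball s ((1 - s)/2), x < 1 ∧
      ∀ θ : ℝ, 1 - c ≤ 1 - x * Real.sin θ ^ 2 := by
    intro x hx
    rw [Metric.mem_ball, Real.dist_eq, abs_lt] at hx
    constructor
    · linarith [hx.2]
    · intro θ
      rcases le_or_gt x 0 with h | h
      · nlinarith [sq_nonneg (Real.sin θ)]
      · nlinarith [Real.sin_sq_le_one θ, sq_nonneg (Real.sin θ), hx.2]
  have main := intervalIntegral.hasDerivAt_integral_of_dominated_loc_of_deriv_le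
    (F := fun x t => Real.sqrt (1 - x * Real.sin t ^ 2))
    (F' := fun x t => -(Real.sin t ^ 2) / (2 * Real.sqrt (1 - x * Real.sin t ^ 2)))
    (x₀ := s) (a := 0) (b := π/2) (μ := volume)
    (bound := fun _ => 1 / (2 * Real.sqrt (1 - c)))
    (Metric.ball_mem_nhds s (by linarith : (0:ℝ) < (1 - s)/2))
    (Eventually.of_forall fun x => (contE' (s := x)).aestronglyMeasurable.restrict)
    ((contE' (s := s)).intervalIntegrable _ _)
    ?_ ?_ ?_ ?_
  · exact main.2
  · apply Continuous.aestronglyMeasurable ?_ |>.restrict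
    apply Continuous.div (by fun_prop) (by fun_prop)
    intro θ
    have := sqrtA_pos hs1 θ
    positivity
  · apply Eventually.of_forall
    intro t _ x hx
    obtain ⟨hx1, hxA⟩ := hball x hx
    have h1 : Real.sqrt (1 - c) ≤ Real.sqrt (1 - x * Real.sin t ^ 2) :=
      Real.sqrt_le_sqrt (hxA t)
    have h2 : 0 < Real.sqrt (1 - c) := Real.sqrt_pos.mpr hcpos
    rw [norm_div, Real.norm_eq_abs, Real.norm_eq_abs, abs_neg, abs_of_nonneg (sq_nonneg _),
      abs_of_nonneg (by positivity : (0:ℝ) ≤ 2 * Real.sqrt (1 - x * Real.sin t ^ 2))]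
    apply div_le_div₀ (by positivity) (Real.sin_sq_le_one t) (by positivity)
    linarith
  · exact (continuous_const.intervalIntegrable _ _)
  · apply Eventually.of_forall
    intro t _ x hx
    exact hasDerivAt_Eint (hball x hx).1

lemma hasDerivAt_Kel_int {s : ℝ} (hs0 : 0 < s) (hs1 : s < 1) :
    HasDerivAt Kel
      (∫ t in (0:ℝ)..(π/2), Real.sin t ^ 2 / (2 * Real.sqrt (1 - s * Real.sin t ^ 2) ^ 3)) s := by
  set c : ℝ := (1 + s) / 2 with hc
  have hc1 : c < 1 := by simp only [hc]; linarith
  have hcpos : 0 < 1 - c := by linarith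
  have hball : ∀ x ∈ Metric.ball s ((1 - s)/2), x < 1 ∧
      ∀ θ : ℝ, 1 - c ≤ 1 - x * Real.sin θ ^ 2 := by
    intro x hx
    rw [Metric.mem_ball, Real.dist_eq, abs_lt] at hx
    constructor
    · linarith [hx.2]
    · intro θ
      rcases le_or_gt x 0 with h | h
      · nlinarith [sq_nonneg (Real.sin θ)]
      · nlinarith [Real.sin_sq_le_one θ, sq_nonneg (Real.sin θ), hx.2]
  have main := intervalIntegral.hasDerivAt_integral_of_dominated_loc_of_deriv_le
    (F := fun x t => 1 / Real.sqrt (1 - x * Real.sin t ^ 2))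
    (F' := fun x t => Real.sin t ^ 2 / (2 * Real.sqrt (1 - x * Real.sin t ^ 2) ^ 3))
    (x₀ := s) (a := 0) (b := π/2) (μ := volume)
    (bound := fun _ => 1 / (2 * Real.sqrt (1 - c) ^ 3))
    (Metric.ball_mem_nhds s (by linarith : (0:ℝ) < (1 - s)/2))
    ?_ ((contK' hs1).intervalIntegrable _ _) ?_ ?_ ?_ ?_
  · exact main.2
  · apply Eventually.of_forall
    intro x
    have m1 : Measurable fun t : ℝ => 1 - x * Real.sin t ^ 2 := by fun_prop
    exact ((measurable_const.div (Real.continuous_sqrt.measurable.comp m1)).aestronglyMeasurable).restrict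
  · apply Continuous.aestronglyMeasurable ?_ |>.restrict
    apply Continuous.div (by fun_prop)
    · fun_prop
    · intro θ
      have := sqrtA_pos hs1 θ
      positivity
  · apply Eventually.of_forall
    intro t _ x hx
    obtain ⟨hx1, hxA⟩ := hball x hx
    have h1 : Real.sqrt (1 - c) ≤ Real.sqrt (1 - x * Real.sin t ^ 2) :=
      Real.sqrt_le_sqrt (hxA t)
    have h2 : 0 < Real.sqrt (1 - c) := Real.sqrt_pos.mpr hcpos
    have h3 : Real.sqrt (1 - c) ^ 3 ≤ Real.sqrt (1 - x * Real.sin t ^ 2) ^ 3 := by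
      gcongr
    rw [norm_div, Real.norm_eq_abs, Real.norm_eq_abs, abs_of_nonneg (sq_nonneg _),
      abs_of_nonneg (by positivity : (0:ℝ) ≤ 2 * Real.sqrt (1 - x * Real.sin t ^ 2) ^ 3)]
    apply div_le_div₀ (by positivity) (Real.sin_sq_le_one t) (by positivity)
    linarith
  · exact (continuous_const.intervalIntegrable _ _)
  · apply Eventually.of_forall
    intro t _ x hx
    exact hasDerivAt_Kint (hball x hx).1





lemma Eder_eq {s : ℝ} (hs0 : 0 < s) (hs1 : s < 1) :
    (∫ t in (0:ℝ)..(π/2), -(Real.sin t ^ 2) / (2 * Real.sqrt (1 - s * Real.sin t ^ 2)))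
      = (Eel s - Kel s) / (2 * s) := by
  have key : (2*s) * (∫ t in (0:ℝ)..(π/2),
      -(Real.sin t ^ 2) / (2 * Real.sqrt (1 - s * Real.sin t ^ 2))) = Eel s - Kel s := by
    rw [← intervalIntegral.integral_const_mul]
    rw [show Eel s - Kel s = ∫ t in (0:ℝ)..(π/2),
        (Real.sqrt (1 - s * Real.sin t ^ 2) - 1 / Real.sqrt (1 - s * Real.sin t ^ 2)) from
      (intervalIntegral.integral_sub (contE'.intervalIntegrable _ _)
        ((contK' hs1).intervalIntegrable _ _)).symm]
    apply intervalIntegral.integral_congr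
    intro θ _
    have hA := A_pos hs1 θ
    have hq := sqrtA_pos hs1 θ
    have hsq : Real.sqrt (1 - s * Real.sin θ ^ 2) ^ 2 = 1 - s * Real.sin θ ^ 2 :=
      Real.sq_sqrt hA.le
    dsimp only
    field_simp
    nlinarith [hsq]
  have h2s : (2*s) ≠ 0 := by positivity
  field_simp at key ⊢
  linarith

lemma hasDerivAt_phi {s : ℝ} (hs1 : s < 1) (θ : ℝ) :
    HasDerivAt (fun t => Real.sin t * Real.cos t / Real.sqrt (1 - s * Real.sin t ^ 2))
      ((1 - 2 * Real.sin θ ^ 2 + s * Real.sin θ ^ 4) / Real.sqrt (1 - s * Real.sin θ ^ 2) ^ 3)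
      θ := by
  have hA := A_pos hs1 θ
  have hq := sqrtA_pos hs1 θ
  have hsq : Real.sqrt (1 - s * Real.sin θ ^ 2) ^ 2 = 1 - s * Real.sin θ ^ 2 :=
    Real.sq_sqrt hA.le
  have hN : HasDerivAt (fun t => Real.sin t * Real.cos t)
      (Real.cos θ * Real.cos θ + Real.sin θ * -Real.sin θ) θ :=
    (Real.hasDerivAt_sin θ).mul (Real.hasDerivAt_cos θ)
  have hi : HasDerivAt (fun t => 1 - s * Real.sin t ^ 2)
      (-(s * (2 * Real.sin θ ^ 1 * Real.cos θ))) θ := by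
    simpa using (((Real.hasDerivAt_sin θ).pow 2).const_mul s).const_sub 1
  have hD : HasDerivAt (fun t => Real.sqrt (1 - s * Real.sin t ^ 2))
      (-(s * (2 * Real.sin θ ^ 1 * Real.cos θ)) / (2 * Real.sqrt (1 - s * Real.sin θ ^ 2))) θ := by
    have := (Real.hasDerivAt_sqrt hA.ne').comp θ hi
    simpa [Function.comp_def, div_eq_mul_inv, mul_comm, mul_assoc, mul_left_comm] using this
  have h := hN.div hD hq.ne'
  convert h using 1 <;> try rfl
  have hc : Real.cos θ ^ 2 = 1 - Real.sin θ ^ 2 := Real.cos_sq' θ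
  have hinv : Real.sqrt (1 - s * Real.sin θ ^ 2) * (Real.sqrt (1 - s * Real.sin θ ^ 2))⁻¹ = 1 :=
    mul_inv_cancel₀ hq.ne'
  rw [div_eq_div_iff (by positivity) (by positivity), div_eq_mul_inv, mul_inv]
  linear_combination (-(s * Real.sin θ ^ 2 * Real.cos θ ^ 2 * Real.sqrt (1 - s * Real.sin θ ^ 2) ^ 2)) * hinv
    + (-(Real.sqrt (1 - s * Real.sin θ ^ 2) ^ 2 * (Real.sqrt (1 - s * Real.sin θ ^ 2) ^ 2 + s * Real.sin θ ^ 2))) * hc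
    + (-(Real.sqrt (1 - s * Real.sin θ ^ 2) ^ 2 * (1 - 2 * Real.sin θ ^ 2))) * hsq

lemma cont_phi' {s : ℝ} (hs1 : s < 1) :
    Continuous fun θ : ℝ =>
      (1 - 2 * Real.sin θ ^ 2 + s * Real.sin θ ^ 4) / Real.sqrt (1 - s * Real.sin θ ^ 2) ^ 3 := by
  apply Continuous.div (by fun_prop)
  · exact (Real.continuous_sqrt.comp (by fun_prop)).pow 3
  · intro θ
    exact pow_ne_zero 3 (sqrtA_pos hs1 θ).ne'

lemma int_phi' {s : ℝ} (hs1 : s < 1) :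
    (∫ θ in (0:ℝ)..(π/2),
      (1 - 2 * Real.sin θ ^ 2 + s * Real.sin θ ^ 4) / Real.sqrt (1 - s * Real.sin θ ^ 2) ^ 3)
      = 0 := by
  rw [intervalIntegral.integral_eq_sub_of_hasDerivAt
    (fun θ _ => hasDerivAt_phi hs1 θ) ((cont_phi' hs1).intervalIntegrable _ _)]
  simp [Real.cos_pi_div_two]

lemma cont_Kint {s : ℝ} (hs1 : s < 1) :
    Continuous fun θ : ℝ =>
      Real.sin θ ^ 2 / (2 * Real.sqrt (1 - s * Real.sin θ ^ 2) ^ 3) := by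
  apply Continuous.div (by fun_prop)
  · exact continuous_const.mul ((Real.continuous_sqrt.comp (by fun_prop)).pow 3)
  · intro θ
    have := sqrtA_pos hs1 θ
    positivity

lemma Kder_eq {s : ℝ} (hs0 : 0 < s) (hs1 : s < 1) :
    (∫ t in (0:ℝ)..(π/2), Real.sin t ^ 2 / (2 * Real.sqrt (1 - s * Real.sin t ^ 2) ^ 3))
      = (Eel s - (1 - s) * Kel s) / (2 * s * (1 - s)) := by
  have h1s : 0 < 1 - s := by linarith
  have i1 : IntervalIntegrable (fun θ : ℝ => Real.sqrt (1 - s * Real.sin θ ^ 2))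
      volume 0 (π/2) := contE'.intervalIntegrable _ _
  have i2 : IntervalIntegrable (fun θ : ℝ => (1 - s) * (1 / Real.sqrt (1 - s * Real.sin θ ^ 2)))
      volume 0 (π/2) := (continuous_const.mul (contK' hs1)).intervalIntegrable _ _
  have i3 : IntervalIntegrable (fun θ : ℝ => s * ((1 - 2 * Real.sin θ ^ 2 + s * Real.sin θ ^ 4)
      / Real.sqrt (1 - s * Real.sin θ ^ 2) ^ 3)) volume 0 (π/2) :=
    (continuous_const.mul (cont_phi' hs1)).intervalIntegrable _ _
  have key : (2 * s * (1 - s)) * (∫ t in (0:ℝ)..(π/2),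
      Real.sin t ^ 2 / (2 * Real.sqrt (1 - s * Real.sin t ^ 2) ^ 3))
      = Eel s - (1 - s) * Kel s := by
    rw [← intervalIntegral.integral_const_mul]
    have e1 : (∫ θ in (0:ℝ)..(π/2),
        (Real.sqrt (1 - s * Real.sin θ ^ 2)
          - (1 - s) * (1 / Real.sqrt (1 - s * Real.sin θ ^ 2))
          - s * ((1 - 2 * Real.sin θ ^ 2 + s * Real.sin θ ^ 4)
              / Real.sqrt (1 - s * Real.sin θ ^ 2) ^ 3)))
        = Eel s - (1 - s) * Kel s := by
      rw [intervalIntegral.integral_sub (i1.sub i2) i3,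
        intervalIntegral.integral_sub i1 i2,
        intervalIntegral.integral_const_mul, intervalIntegral.integral_const_mul, int_phi' hs1]
      simp [Eel, Kel]
    rw [← e1]
    apply intervalIntegral.integral_congr
    intro θ _
    have hA := A_pos hs1 θ
    have hq := sqrtA_pos hs1 θ
    have hsq : Real.sqrt (1 - s * Real.sin θ ^ 2) ^ 2 = 1 - s * Real.sin θ ^ 2 :=
      Real.sq_sqrt hA.le
    dsimp only
    field_simp
    linear_combination (-(Real.sqrt (1 - s * Real.sin θ ^ 2) ^ 2 + (1 - s * Real.sin θ ^ 2) - (1 - s))) * hsq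
  have h2s : (2 * s * (1 - s)) ≠ 0 := by positivity
  field_simp at key ⊢
  linarith

lemma hasDerivAt_Eel {s : ℝ} (hs0 : 0 < s) (hs1 : s < 1) :
    HasDerivAt Eel ((Eel s - Kel s) / (2 * s)) s := by
  have h := hasDerivAt_Eel_int hs0 hs1
  rwa [Eder_eq hs0 hs1] at h

lemma hasDerivAt_Kel {s : ℝ} (hs0 : 0 < s) (hs1 : s < 1) :
    HasDerivAt Kel ((Eel s - (1 - s) * Kel s) / (2 * s * (1 - s))) s := by
  have h := hasDerivAt_Kel_int hs0 hs1
  rwa [Kder_eq hs0 hs1] at h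

noncomputable def Qf (s : ℝ) : ℝ := 6 * (1 - s) * Kel s - (6 - 5 * s) * Eel s
noncomputable def Pf (s : ℝ) : ℝ := (48 - 15 * s) * Eel s - (48 - 39 * s) * Kel s
noncomputable def Hf (s : ℝ) : ℝ :=
  4 * (1 - s) * (4 - 3 * s) * Kel s - (16 - 20 * s + 3 * s ^ 2) * Eel s
noncomputable def Ff (s : ℝ) : ℝ :=
  (1 - s) * Kel s ^ 2 - 2 * Kel s * Eel s + (4 + s) / (4 - 3 * s) * Eel s ^ 2

lemma hasDerivAt_Qf {s : ℝ} (hs0 : 0 < s) (hs1 : s < 1) :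
    HasDerivAt Qf ((15 * Eel s - 11 * Kel s) / 2) s := by
  have hK := hasDerivAt_Kel hs0 hs1
  have hE := hasDerivAt_Eel hs0 hs1
  have h1 : HasDerivAt (fun x : ℝ => 6 * (1 - x)) (-6) s := by
    simpa using ((hasDerivAt_id s).const_sub 1).const_mul 6
  have h2 : HasDerivAt (fun x : ℝ => 6 - 5 * x) (-5) s := by
    simpa using ((hasDerivAt_id s).const_mul 5).const_sub 6
  have h := (h1.mul hK).sub (h2.mul hE)
  convert h using 1 <;> try rfl
  have hs : s ≠ 0 := hs0.ne'
  have hs' : (1:ℝ) - s ≠ 0 := by linarith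
  field_simp
  ring

lemma hasDerivAt_Pf {s : ℝ} (hs0 : 0 < s) (hs1 : s < 1) :
    HasDerivAt Pf (9 / (2 * (1 - s)) * Qf s) s := by
  have hK := hasDerivAt_Kel hs0 hs1
  have hE := hasDerivAt_Eel hs0 hs1
  have h1 : HasDerivAt (fun x : ℝ => 48 - 15 * x) (-15) s := by
    simpa using ((hasDerivAt_id s).const_mul 15).const_sub 48
  have h2 : HasDerivAt (fun x : ℝ => 48 - 39 * x) (-39) s := by
    simpa using ((hasDerivAt_id s).const_mul 39).const_sub 48
  have h := (h1.mul hE).sub (h2.mul hK)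
  convert h using 1 <;> try rfl
  have hs : s ≠ 0 := hs0.ne'
  have hs' : (1:ℝ) - s ≠ 0 := by linarith
  unfold Qf
  field_simp
  ring

lemma hasDerivAt_Hf {s : ℝ} (hs0 : 0 < s) (hs1 : s < 1) :
    HasDerivAt Hf (Pf s / 2) s := by
  have hK := hasDerivAt_Kel hs0 hs1
  have hE := hasDerivAt_Eel hs0 hs1
  have h1 : HasDerivAt (fun x : ℝ => 4 * (1 - x) * (4 - 3 * x)) (24 * s - 28) s := by
    have := (((hasDerivAt_id s).const_sub 1).const_mul 4).mul
      (((hasDerivAt_id s).const_mul 3).const_sub 4)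
    convert this using 1 <;> try rfl
    simp only [id_eq]
    ring
  have h2 : HasDerivAt (fun x : ℝ => 16 - 20 * x + 3 * x ^ 2) (-20 + 3 * (2 * s)) s := by
    have := (((hasDerivAt_id s).const_mul 20).const_sub 16).add
      (((hasDerivAt_pow 2 s)).const_mul 3)
    simpa [Pi.add_def] using this
  have h := (h1.mul hK).sub (h2.mul hE)
  convert h using 1 <;> try rfl
  have hs : s ≠ 0 := hs0.ne'
  have hs' : (1:ℝ) - s ≠ 0 := by linarith
  unfold Pf
  field_simp
  ring

lemma hasDerivAt_Ff {s : ℝ} (hs0 : 0 < s) (hs1 : s < 1) :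
    HasDerivAt Ff (-(Eel s / ((4 - 3 * s) ^ 2 * (1 - s))) * Hf s) s := by
  have hK := hasDerivAt_Kel hs0 hs1
  have hE := hasDerivAt_Eel hs0 hs1
  have hs : s ≠ 0 := hs0.ne'
  have hs' : (1:ℝ) - s ≠ 0 := by linarith
  have hs'' : (4:ℝ) - 3 * s ≠ 0 := by nlinarith
  have h1 : HasDerivAt (fun x : ℝ => (1 - x) * Kel x ^ 2)
      ((-1) * Kel s ^ 2 + (1 - s) * (2 * Kel s * ((Eel s - (1 - s) * Kel s) / (2 * s * (1 - s))))) s := by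
    exact ((hasDerivAt_id s).const_sub 1).mul ((hK.pow 2).congr_deriv (by ring))
  have h2 : HasDerivAt (fun x : ℝ => 2 * Kel x * Eel x)
      ((2 * ((Eel s - (1 - s) * Kel s) / (2 * s * (1 - s)))) * Eel s
        + 2 * Kel s * ((Eel s - Kel s) / (2 * s))) s :=
    (hK.const_mul 2).mul hE
  have h3 : HasDerivAt (fun x : ℝ => (4 + x) / (4 - 3 * x)) (16 / (4 - 3 * s) ^ 2) s := by
    have := ((hasDerivAt_id s).const_add 4).div (((hasDerivAt_id s).const_mul 3).const_sub 4) hs''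
    convert this using 1 <;> try rfl
    simp only [id]
    field_simp
    ring
  have h4 : HasDerivAt (fun x : ℝ => (4 + x) / (4 - 3 * x) * Eel x ^ 2)
      (16 / (4 - 3 * s) ^ 2 * Eel s ^ 2
        + (4 + s) / (4 - 3 * s) * (2 * Eel s * ((Eel s - Kel s) / (2 * s)))) s :=
    h3.mul ((hE.pow 2).congr_deriv (by ring))
  have h := (h1.sub h2).add h4
  convert h using 1 <;> try rfl
  unfold Hf
  field_simp
  ring

noncomputable def Rf (s : ℝ) : ℝ := (15 * Eel s - 11 * Kel s) / 2

lemma contQf : ContinuousOn Qf (Iio 1) := by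
  unfold Qf
  exact (ContinuousOn.mul (by fun_prop) contKel).sub
    (ContinuousOn.mul (by fun_prop) contEel.continuousOn)

lemma contPf : ContinuousOn Pf (Iio 1) := by
  unfold Pf
  exact (ContinuousOn.mul (by fun_prop) contEel.continuousOn).sub
    (ContinuousOn.mul (by fun_prop) contKel)

lemma contHf : ContinuousOn Hf (Iio 1) := by
  unfold Hf
  exact (ContinuousOn.mul (by fun_prop) contKel).sub
    (ContinuousOn.mul (by fun_prop) contEel.continuousOn)

lemma contRf : ContinuousOn Rf (Iio 1) := by
  unfold Rf
  exact ((ContinuousOn.mul (by fun_prop) contEel.continuousOn).sub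
    (ContinuousOn.mul (by fun_prop) contKel)).div_const 2

lemma contFf : ContinuousOn Ff (Iio 1) := by
  unfold Ff
  apply ContinuousOn.add
  · exact (ContinuousOn.mul (by fun_prop) (contKel.pow 2)).sub
      ((ContinuousOn.mul (by fun_prop) contKel).mul contEel.continuousOn)
  · apply ContinuousOn.mul ?_ (contEel.continuousOn.pow 2)
    apply ContinuousOn.div (by fun_prop) (by fun_prop)
    intro x hx
    have h1 : x < 1 := hx
    nlinarith

lemma Qf_zero : Qf 0 = 0 := by
  simp [Qf, Kel_zero, Eel_zero]; try ring

lemma Pf_zero : Pf 0 = 0 := by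
  simp [Pf, Kel_zero, Eel_zero]; try ring

lemma Hf_zero : Hf 0 = 0 := by
  simp [Hf, Kel_zero, Eel_zero]; try ring

lemma Ff_zero : Ff 0 = 0 := by
  simp [Ff, Kel_zero, Eel_zero]; try ring

lemma Rf_antitone : AntitoneOn Rf (Ioo 0 1) := by
  have hD : Convex ℝ (Ioo (0:ℝ) 1) := convex_Ioo 0 1
  apply antitoneOn_of_hasDerivWithinAt_nonpos hD
    (contRf.mono (Ioo_subset_Iio_self))
    (f' := fun x => (15 * ((Eel x - Kel x) / (2 * x))
      - 11 * ((Eel x - (1 - x) * Kel x) / (2 * x * (1 - x)))) / 2)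
  · intro x hx
    rw [interior_Ioo] at hx
    exact ((((hasDerivAt_Eel hx.1 hx.2).const_mul 15).sub
      ((hasDerivAt_Kel hx.1 hx.2).const_mul 11)).div_const 2).hasDerivWithinAt
  · intro x hx
    rw [interior_Ioo] at hx
    obtain ⟨hx0, hx1⟩ := hx
    have hE := Eel_pos hx1
    have hK := Kel_pos hx0.le hx1
    have hEK := Eel_le_Kel hx0.le hx1
    have h1x : 0 < 1 - x := by linarith
    have hnum : (4 - 15 * x) * Eel x - 4 * (1 - x) * Kel x ≤ 0 := by
      rcases le_or_gt (4 - 15 * x) 0 with h | h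
      · nlinarith
      · nlinarith
    have heq : (15 * ((Eel x - Kel x) / (2 * x))
        - 11 * ((Eel x - (1 - x) * Kel x) / (2 * x * (1 - x)))) / 2
        = ((4 - 15 * x) * Eel x - 4 * (1 - x) * Kel x) / (4 * x * (1 - x)) := by
      field_simp
      ring
    rw [heq]
    exact div_nonpos_of_nonpos_of_nonneg hnum (by positivity)

lemma Qf_ssc {u : ℝ} (hu : u ∈ Ioo (0:ℝ) 1) (hQu : Qf u ≤ 0) :
    ∀ v ∈ Ico u 1, Qf v ≤ 0 := by
  intro v hv
  rcases eq_or_lt_of_le hv.1 with rfl | huv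
  · exact hQu
  by_contra hpos
  push_neg at hpos
  have hv1 : v < 1 := hv.2
  -- MVT on [u, v]
  obtain ⟨w, hw, hweq⟩ := exists_hasDerivAt_eq_slope Qf Rf huv
    (contQf.mono (fun x hx => lt_of_le_of_lt hx.2 hv1))
    (fun x hx => by
      have h1 : 0 < x := lt_trans hu.1 hx.1
      have h2 : x < 1 := lt_trans hx.2 hv1
      exact hasDerivAt_Qf h1 h2)
  -- MVT on [0, u]
  obtain ⟨w', hw', hw'eq⟩ := exists_hasDerivAt_eq_slope Qf Rf hu.1
    (contQf.mono (fun x hx => lt_of_le_of_lt hx.2 hu.2))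
    (fun x hx => hasDerivAt_Qf hx.1 (lt_trans hx.2 hu.2))
  have hRw : 0 < Rf w := by
    rw [hweq]
    apply div_pos (by linarith) (by linarith)
  have hRw' : Rf w' ≤ 0 := by
    rw [hw'eq, Qf_zero]
    apply div_nonpos_of_nonpos_of_nonneg (by linarith) (by linarith [hu.1])
  have hlt : w' < w := lt_trans hw'.2 hw.1
  have hmem1 : w' ∈ Ioo (0:ℝ) 1 := ⟨hw'.1, lt_trans hw'.2 hu.2⟩
  have hmem2 : w ∈ Ioo (0:ℝ) 1 := ⟨lt_trans hu.1 hw.1, lt_trans hw.2 hv1⟩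
  have := Rf_antitone hmem1 hmem2 hlt.le
  linarith

lemma Hf_pos {s : ℝ} (hs : s ∈ Ioo (0:ℝ) 1) : 0 < Hf s := by
  obtain ⟨hs0, hs1⟩ := hs
  by_cases hP : ∀ t ∈ Ioo (0:ℝ) s, 0 < Pf t
  · -- Hf strictly increasing on [0, s]
    have hmono : StrictMonoOn Hf (Icc 0 s) := by
      apply strictMonoOn_of_hasDerivWithinAt_pos (convex_Icc 0 s)
        (contHf.mono (fun x hx => lt_of_le_of_lt hx.2 hs1))
        (f' := fun x => Pf x / 2)
      · intro x hx
        rw [interior_Icc] at hx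
        exact (hasDerivAt_Hf hx.1 (lt_trans hx.2 hs1)).hasDerivWithinAt
      · intro x hx
        rw [interior_Icc] at hx
        have := hP x hx
        linarith
    have := hmono (left_mem_Icc.mpr hs0.le) (right_mem_Icc.mpr hs0.le) hs0
    rwa [Hf_zero] at this
  · push_neg at hP
    obtain ⟨t, ht, hPt⟩ := hP
    -- find u ≤ t with Qf u ≤ 0
    have hQex : ∃ u ∈ Ioo (0:ℝ) t, Qf u ≤ 0 := by
      by_contra hQ
      push_neg at hQ
      have hmono : StrictMonoOn Pf (Icc 0 t) := by
        apply strictMonoOn_of_hasDerivWithinAt_pos (convex_Icc 0 t)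
          (contPf.mono (fun x hx => lt_of_le_of_lt hx.2 (lt_trans ht.2 hs1)))
          (f' := fun x => 9 / (2 * (1 - x)) * Qf x)
        · intro x hx
          rw [interior_Icc] at hx
          exact (hasDerivAt_Pf hx.1 (lt_trans hx.2 (lt_trans ht.2 hs1))).hasDerivWithinAt
        · intro x hx
          rw [interior_Icc] at hx
          have h1 : 0 < Qf x := hQ x hx
          have h2 : x < 1 := lt_trans hx.2 (lt_trans ht.2 hs1)
          have : (0:ℝ) < 9 / (2 * (1 - x)) := by
            apply div_pos (by norm_num)
            linarith
          positivity
      have := hmono (left_mem_Icc.mpr ht.1.le) (right_mem_Icc.mpr ht.1.le) ht.1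
      rw [Pf_zero] at this
      linarith
    obtain ⟨u, hu, hQu⟩ := hQex
    have hu1 : u ∈ Ioo (0:ℝ) 1 := ⟨hu.1, lt_trans hu.2 (lt_trans ht.2 hs1)⟩
    have hQle := Qf_ssc hu1 hQu
    -- Pf antitone on Ico u 1
    have hPanti : AntitoneOn Pf (Ico u 1) := by
      apply antitoneOn_of_hasDerivWithinAt_nonpos (convex_Ico u 1)
        (contPf.mono (fun x hx => hx.2))
        (f' := fun x => 9 / (2 * (1 - x)) * Qf x)
      · intro x hx
        rw [interior_Ico] at hx
        exact (hasDerivAt_Pf (lt_trans hu.1 hx.1) hx.2).hasDerivWithinAt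
      · intro x hx
        rw [interior_Ico] at hx
        have hQx : Qf x ≤ 0 := hQle x ⟨hx.1.le, hx.2⟩
        have : (0:ℝ) ≤ 9 / (2 * (1 - x)) := by
          apply div_nonneg (by norm_num)
          linarith [hx.2]
        exact mul_nonpos_of_nonneg_of_nonpos this hQx
    -- Pf ≤ 0 on [t, 1)
    have hPle : ∀ v ∈ Ico t 1, Pf v ≤ 0 := by
      intro v hv
      have h1 : t ∈ Ico u 1 := ⟨hu.2.le, lt_trans ht.2 hs1⟩
      have h2 : v ∈ Ico u 1 := ⟨le_trans hu.2.le hv.1, hv.2⟩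
      exact le_trans (hPanti h1 h2 hv.1) hPt
    -- Hf antitone on Ico t 1
    have hHanti : AntitoneOn Hf (Ico t 1) := by
      apply antitoneOn_of_hasDerivWithinAt_nonpos (convex_Ico t 1)
        (contHf.mono (fun x hx => hx.2))
        (f' := fun x => Pf x / 2)
      · intro x hx
        rw [interior_Ico] at hx
        exact (hasDerivAt_Hf (lt_trans ht.1 hx.1) hx.2).hasDerivWithinAt
      · intro x hx
        rw [interior_Ico] at hx
        have := hPle x ⟨hx.1.le, hx.2⟩
        linarith
    set s' : ℝ := max s (24/25) with hs'
    have hs'1 : s' < 1 := by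
      apply max_lt hs1
      norm_num
    have hs's : s ≤ s' := le_max_left _ _
    have hs'24 : (24:ℝ)/25 ≤ s' := le_max_right _ _
    have hmem1 : s ∈ Ico t 1 := ⟨ht.2.le, hs1⟩
    have hmem2 : s' ∈ Ico t 1 := ⟨le_trans ht.2.le hs's, hs'1⟩
    have hHs : Hf s' ≤ Hf s := hHanti hmem1 hmem2 hs's
    have hs'0 : (0:ℝ) ≤ s' := by linarith [hs'24]
    have hK := Kel_pos hs'0 hs'1
    have hE := Eel_pos hs'1
    have hHs' : 0 < Hf s' := by
      unfold Hf
      have hq : 16 - 20 * s' + 3 * s' ^ 2 ≤ 0 := by nlinarith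
      have h1 : (0:ℝ) < 4 * (1 - s') * (4 - 3 * s') := by nlinarith
      nlinarith [mul_pos h1 hK, mul_nonneg (neg_nonneg.mpr hq) hE.le]
    linarith

lemma Ff_neg {s : ℝ} (hs : s ∈ Ioo (0:ℝ) 1) : Ff s < 0 := by
  obtain ⟨hs0, hs1⟩ := hs
  have hanti : StrictAntiOn Ff (Icc 0 s) := by
    apply strictAntiOn_of_hasDerivWithinAt_neg (convex_Icc 0 s)
      (contFf.mono (fun x hx => lt_of_le_of_lt hx.2 hs1))
      (f' := fun x => -(Eel x / ((4 - 3 * x) ^ 2 * (1 - x))) * Hf x)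
    · intro x hx
      rw [interior_Icc] at hx
      exact (hasDerivAt_Ff hx.1 (lt_trans hx.2 hs1)).hasDerivWithinAt
    · intro x hx
      rw [interior_Icc] at hx
      have hx1 : x < 1 := lt_trans hx.2 hs1
      have hH := Hf_pos ⟨hx.1, hx1⟩
      have hE := Eel_pos hx1
      have h1 : (0:ℝ) < (4 - 3 * x) ^ 2 * (1 - x) :=
        mul_pos (pow_pos (by linarith : (0:ℝ) < 4 - 3 * x) 2) (by linarith : (0:ℝ) < 1 - x)
      have h2 : 0 < Eel x / ((4 - 3 * x) ^ 2 * (1 - x)) := div_pos hE h1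
      have := mul_pos h2 hH
      linarith
  have := hanti (left_mem_Icc.mpr hs0.le) (right_mem_Icc.mpr hs0.le) hs0
  rwa [Ff_zero] at this

/-- For `0 < s < 1`, `(1-s)(K/E)² - 2(K/E) + (4+s)/(4-3s) < 0`. -/
theorem g_neg (s : ℝ) (hs0 : 0 < s) (hs1 : s < 1) :
    (1 - s) * (Kel s / Eel s) ^ 2 - 2 * (Kel s / Eel s) + (4 + s) / (4 - 3 * s) < 0 := by
  have hF := Ff_neg ⟨hs0, hs1⟩
  have hE := Eel_pos hs1
  have h43 : (4:ℝ) - 3 * s ≠ 0 := by nlinarith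
  have heq : (1 - s) * (Kel s / Eel s) ^ 2 - 2 * (Kel s / Eel s) + (4 + s) / (4 - 3 * s)
      = Ff s / Eel s ^ 2 := by
    unfold Ff
    field_simp
  rw [heq]
  exact div_neg_of_neg_of_pos hF (by positivity)
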